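/- Let c be a pure quaternion with ‖c‖ ≤ 2, Q_c(q) = sp_2(q) + c, and suppose ‖Q_c^(m)(0)‖ = 2 + δ for some m ≥ 1 and δ > 0. Then for every n ≥ 1, ‖Q_c^(m+n)(0)‖ ≥ 2 + 4^n δ. -/

import Mathlib

open scoped Quaternion
open Bornology

noncomputable def sCoord (ρ θ φ : ℝ) : ℍ[ℝ] :=
  ⟨0, ρ * (Real.sin φ * Real.cos θ), ρ * (Real.sin φ * Real.sin θ), ρ * Real.cos φ⟩

noncomputable def sphRho (q : ℍ[ℝ]) : ℝ := ‖q‖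

noncomputable def sphTheta (q : ℍ[ℝ]) : ℝ :=
  if q.imI = 0 ∧ q.imJ = 0 then 0
  else if Complex.arg ⟨q.imI, q.imJ⟩ < 0 then Complex.arg ⟨q.imI, q.imJ⟩ + 2 * Real.pi
  else Complex.arg ⟨q.imI, q.imJ⟩

open Classical in
noncomputable def sphPhi (q : ℍ[ℝ]) : ℝ :=
  if q = 0 then 0 else Real.arccos (q.imK / ‖q‖)

noncomputable def sprod (q₁ q₂ : ℍ[ℝ]) : ℍ[ℝ] :=
  sCoord (sphRho q₁ * sphRho q₂) (sphTheta q₁ + sphTheta q₂) (sphPhi q₁ + sphPhi q₂)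

noncomputable def spow (n : ℕ) (q : ℍ[ℝ]) : ℍ[ℝ] :=
  sCoord (sphRho q ^ n) (n * sphTheta q) (n * sphPhi q)

lemma norm_sCoord (ρ θ φ : ℝ) : ‖sCoord ρ θ φ‖ = |ρ| := by
  have h : Quaternion.normSq (sCoord ρ θ φ) = ρ ^ 2 := by
    rw [Quaternion.normSq_def']; simp [sCoord]
    ring_nf
    rw [show ρ^2 * Real.sin φ ^2 * Real.cos θ ^2 + ρ^2 * Real.sin φ ^2 * Real.sin θ ^2
        = ρ^2 * Real.sin φ ^2 * (Real.cos θ ^2 + Real.sin θ ^2) by ring,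
      Real.cos_sq_add_sin_sq,
      show ρ^2 * Real.sin φ ^2 * 1 + ρ^2 * Real.cos φ ^2
        = ρ^2 * (Real.sin φ ^2 + Real.cos φ ^2) by ring,
      Real.sin_sq_add_cos_sq]
    ring
  have := Quaternion.normSq_eq_norm_mul_self (sCoord ρ θ φ)
  nlinarith [norm_nonneg (sCoord ρ θ φ), abs_nonneg ρ, sq_abs ρ]

lemma norm_spow2 (q : ℍ[ℝ]) : ‖spow 2 q‖ = ‖q‖ ^ 2 := by
  rw [spow, norm_sCoord, sphRho, abs_of_nonneg (by positivity)]

/-- Escape growth: once an iterate exceeds 2 in norm, later iterates grow. -/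
theorem iterate_escape (c : ℍ[ℝ]) (hc : c.re = 0) (hc2 : ‖c‖ ≤ 2)
    (δ : ℝ) (hδ : δ > 0) (m : ℕ) (hm : 1 ≤ m)
    (h : ‖(fun q : ℍ[ℝ] => spow 2 q + c)^[m] 0‖ = 2 + δ) :
    ∀ n : ℕ, 1 ≤ n →
      ‖(fun q : ℍ[ℝ] => spow 2 q + c)^[m + n] 0‖ ≥ 2 + 4 ^ n * δ := by
  have step : ∀ (x : ℍ[ℝ]) (ε : ℝ), 0 < ε → ‖x‖ ≥ 2 + ε →
      ‖spow 2 x + c‖ ≥ 2 + 4 * ε := by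
    intro x ε hε hx
    have h2 : ‖spow 2 x‖ = ‖x‖ ^ 2 := norm_spow2 x
    have h3 : ‖spow 2 x‖ ≤ ‖spow 2 x + c‖ + ‖c‖ := by
      calc ‖spow 2 x‖ = ‖(spow 2 x + c) + (-c)‖ := by rw [add_neg_cancel_right]
        _ ≤ ‖spow 2 x + c‖ + ‖-c‖ := norm_add_le _ _
        _ = ‖spow 2 x + c‖ + ‖c‖ := by rw [norm_neg]
    nlinarith [norm_nonneg x]
  intro n hn
  induction n with
  | zero => omega
  | succ k ih =>
    rcases Nat.eq_or_lt_of_le hn with h1 | h1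
    · -- k = 0
      have hk : k = 0 := by omega
      subst hk
      rw [show m + 1 = m + 1 from rfl, Function.iterate_succ_apply']
      have := step _ δ hδ (le_of_eq h.symm)
      simpa [pow_one] using this
    · have hk : 1 ≤ k := by omega
      have ihk := ih hk
      rw [show m + (k+1) = (m + k) + 1 by ring, Function.iterate_succ_apply']
      have hε : (0:ℝ) < 4 ^ k * δ := by positivity
      have := step _ (4 ^ k * δ) hε ihk
      calc ‖(fun q : ℍ[ℝ] => spow 2 q + c) ((fun q : ℍ[ℝ] => spow 2 q + c)^[m+k] 0)‖
          ≥ 2 + 4 * (4 ^ k * δ) := this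
        _ = 2 + 4 ^ (k+1) * δ := by ring
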